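/- arXiv:1404.3501 — 2 statements merged into one kernel-verified Lean document; each statement's English description precedes it below -/
import Mathlib

section
/- With the matching-based decomposition E₀ ⊆ E₁ ⊆ … ⊆ E_k = E of the edges of G by a maximal matching b₁, …, b_k, if T is a minimal transversal of E_{i−1} (i.e., T ⊆ E and every edge of E_{i−1} is adjacent to some edge of T, minimally so) and T is not a transversal of E_i, then T ∪ {b_i} is a minimal transversal of E_i. -/
/-- Two edges (as unordered pairs) are adjacent if they share an endpoint;
in particular every (nonempty) edge is adjacent to itself. -/
def eAdj {V : Type*} (e f : Sym2 V) : Prop := ∃ v, v ∈ e ∧ v ∈ f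

/-- `b 1, …, b k` is a maximal matching of `G`: the `b j` are edges of `G`, pairwise
non-adjacent, and every edge of `G` is adjacent to some `b j`. -/
def MaxMatching {V : Type*} (G : SimpleGraph V) (k : ℕ) (b : ℕ → Sym2 V) : Prop :=
  (∀ j, 1 ≤ j → j ≤ k → b j ∈ G.edgeSet) ∧
  (∀ j j', 1 ≤ j → j ≤ k → 1 ≤ j' → j' ≤ k → j ≠ j' → ¬ eAdj (b j) (b j')) ∧
  (∀ e ∈ G.edgeSet, ∃ j, 1 ≤ j ∧ j ≤ k ∧ eAdj e (b j))

/-- `V_i = V` minus the endpoints of the later matching edges `b_{i+1}, …, b_k`. -/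
def Vset {V : Type*} (k : ℕ) (b : ℕ → Sym2 V) (i : ℕ) : Set V :=
  {v | ∀ j, i < j → j ≤ k → v ∉ b j}

/-- `E_i`: edges of `G` contained in `V_i`. -/
def Eset {V : Type*} (G : SimpleGraph V) (k : ℕ) (b : ℕ → Sym2 V) (i : ℕ) : Set (Sym2 V) :=
  {e ∈ G.edgeSet | ∀ v ∈ e, v ∈ Vset k b i}

/-- `B_i = E_i \ E_{i-1}`. -/
def Bset {V : Type*} (G : SimpleGraph V) (k : ℕ) (b : ℕ → Sym2 V) (i : ℕ) : Set (Sym2 V) :=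
  Eset G k b i \ Eset G k b (i - 1)

/-- `T` is a transversal of the edge set `E'`: every edge of `E'` is adjacent to
some edge of `T`. -/
def TrOf {V : Type*} (E' T : Set (Sym2 V)) : Prop := ∀ e ∈ E', ∃ f ∈ T, eAdj e f

/-- Private neighbors of `e` w.r.t. `T` within `E'`: edges of `E'` adjacent to `e` but to
no edge of `T \ {e}`. -/
def PrivE {V : Type*} (E' : Set (Sym2 V)) (e : Sym2 V) (T : Set (Sym2 V)) : Set (Sym2 V) :=
  {f ∈ E' | eAdj e f ∧ ∀ g ∈ T \ {e}, ¬ eAdj f g}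

/-- `T` is a minimal transversal of `E'`. -/
def MinTrOf {V : Type*} (E' T : Set (Sym2 V)) : Prop :=
  TrOf E' T ∧ ∀ e ∈ T, (PrivE E' e T).Nonempty

/-- if `T` is a minimal transversal of `E_{i-1}` but not a transversal of
`E_i`, then `T ∪ {b_i}` is a minimal transversal of `E_i`. -/
theorem insert_matching_edge_minTr
    {V : Type*} (G : SimpleGraph V) (k : ℕ) (b : ℕ → Sym2 V)
    (hM : MaxMatching G k b) (i : ℕ) (hi1 : 1 ≤ i) (hik : i ≤ k)
    (T : Set (Sym2 V)) (hTE : T ⊆ G.edgeSet)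
    (hT : MinTrOf (Eset G k b (i - 1)) T)
    (hnot : ¬ TrOf (Eset G k b i) T) :
    MinTrOf (Eset G k b i) (T ∪ {b i}) := by
  -- E_{i-1} ⊆ E_i
  have hsub : Eset G k b (i - 1) ⊆ Eset G k b i := by
    rintro e ⟨heG, hv⟩
    exact ⟨heG, fun v hv' j hj hjk => hv v hv' j (by omega) hjk⟩
  -- edges of E_{i-1} are not adjacent to b i
  have hEprev : ∀ f ∈ Eset G k b (i - 1), ¬ eAdj f (b i) := by
    rintro f ⟨hfG, hv⟩ ⟨v, hvf, hvb⟩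
    exact hv v hvf i (by omega) hik hvb
  -- edges of E_i \ E_{i-1} are adjacent to b i
  have hBi : ∀ e ∈ Eset G k b i, e ∉ Eset G k b (i - 1) → eAdj e (b i) := by
    rintro e ⟨heG, hv⟩ hne
    simp only [Eset, Set.mem_setOf_eq, not_and, not_forall] at hne
    obtain ⟨v, hve, hvnot⟩ := hne heG
    simp only [Vset, Set.mem_setOf_eq, not_forall] at hvnot
    obtain ⟨j, hj1, hjk, hvb⟩ := hvnot
    rw [not_not] at hvb
    have : j = i := by
      by_contra hji
      exact hv v hve j (by omega) hjk hvb
    exact ⟨v, hve, this ▸ hvb⟩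
  constructor
  · -- transversal
    intro e he
    by_cases hprev : e ∈ Eset G k b (i - 1)
    · obtain ⟨f, hfT, hadj⟩ := hT.1 e hprev
      exact ⟨f, Or.inl hfT, hadj⟩
    · exact ⟨b i, Or.inr rfl, hBi e he hprev⟩
  · rintro t (htT | htb)
    · -- t ∈ T : use its private neighbor from E_{i-1}
      obtain ⟨f, hfE, hadj, hpriv⟩ := hT.2 t htT
      refine ⟨f, hsub hfE, hadj, ?_⟩
      rintro g ⟨(hgT | hgb), hgt⟩
      · exact hpriv g ⟨hgT, hgt⟩
      · rw [Set.mem_singleton_iff] at hgb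
        subst hgb
        exact hEprev f hfE
    · -- t = b i : some edge of E_i missed by T is a private neighbor
      rw [Set.mem_singleton_iff] at htb
      subst htb
      simp only [TrOf, not_forall] at hnot
      obtain ⟨e, he, hmiss⟩ := hnot
      have hnotadj : ∀ g ∈ T, ¬ eAdj e g := by
        intro g hg hadj
        exact hmiss ⟨g, hg, hadj⟩
      have hprev : e ∉ Eset G k b (i - 1) := by
        intro hp
        obtain ⟨f, hfT, hadj⟩ := hT.1 e hp
        exact hnotadj f hfT hadj
      refine ⟨e, he, ?_, ?_⟩
      · obtain ⟨v, hv1, hv2⟩ := hBi e he hprev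
        exact ⟨v, hv2, hv1⟩
      · rintro g ⟨(hgT | hgb), hgt⟩
        · exact fun h => hnotadj g hgT h
        · exact absurd hgb hgt
end

section
/- Let T be a minimal transversal of E_{i−1} and T' a minimal transversal of E_i with T ⊆ T'. Then every edge e ∈ T' \ T has all its private neighbors (with respect to T' in E_i) contained in B_i = E_i \ E_{i−1}. -/
/-- if `T ∈ tr(E_{i-1})`, `T' ∈ tr(E_i)` and `T ⊆ T'`, then every edge
`e ∈ T' \ T` has all its private neighbors (w.r.t. `T'` in `E_i`) inside `B_i`. -/
theorem new_edges_private_neighbors_in_Bi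
    {V : Type*} (G : SimpleGraph V) (k : ℕ) (b : ℕ → Sym2 V)
    (hM : MaxMatching G k b) (i : ℕ) (hi1 : 1 ≤ i) (hik : i ≤ k)
    (T T' : Set (Sym2 V)) (hTE : T ⊆ G.edgeSet) (hT'E : T' ⊆ G.edgeSet)
    (hT : MinTrOf (Eset G k b (i - 1)) T)
    (hT' : MinTrOf (Eset G k b i) T')
    (hsub : T ⊆ T') :
    ∀ e ∈ T' \ T, PrivE (Eset G k b i) e T' ⊆ Bset G k b i := by
  rintro e ⟨heT', heT⟩ f ⟨hfE, hadj, hpriv⟩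
  refine ⟨hfE, fun hfE' => ?_⟩
  obtain ⟨g, hgT, hgadj⟩ := hT.1 f hfE'
  exact hpriv g ⟨hsub hgT, fun hge => heT (hge ▸ hgT)⟩ hgadj
end
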